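/- Let k ≥ 1, m ≥ 2, let w* ∈ ℝ^m be nonzero, and let 0 < λ < 1. If w_t ≠ 0 and 0 < θ_t < π, then the gradient descent iterate w_{t+1} = w_t − λ·G(w_t) is nonzero and satisfies θ_{t+1} < θ_t. -/

import Mathlib

open scoped RealInnerProductSpace
open InnerProductGeometry Real Classical

/-- The ReLU function `σ(z) = max{z, 0}`. -/
noncomputable def relu (z : ℝ) : ℝ := max z 0

/-- `g u v = (1/(2π))·‖u‖·‖v‖·(sin θ_{u,v} + (π − θ_{u,v})·cos θ_{u,v})`. -/
noncomputable def g {E : Type*} [NormedAddCommGroup E] [InnerProductSpace ℝ E]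
    (u v : E) : ℝ :=
  (1 / (2 * π)) * ‖u‖ * ‖v‖ *
    (Real.sin (angle u v) + (π - angle u v) * Real.cos (angle u v))

/-- The no-overlap population loss
`ℓ(w) = (1/k²)·(γ‖w‖² − 2k·g(w,w*) − 2β‖w‖‖w*‖ + γ‖w*‖²)`,
where `β = (k²−k)/(2π)` and `γ = β + k/2`. -/
noncomputable def nol {m : ℕ} (k : ℕ) (ws : EuclideanSpace ℝ (Fin m))
    (w : EuclideanSpace ℝ (Fin m)) : ℝ :=
  (1 / (k : ℝ) ^ 2) *
    (((((k : ℝ) ^ 2 - k) / (2 * π)) + (k : ℝ) / 2) * ‖w‖ ^ 2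
      - 2 * (k : ℝ) * g w ws
      - 2 * (((k : ℝ) ^ 2 - k) / (2 * π)) * ‖w‖ * ‖ws‖
      + ((((k : ℝ) ^ 2 - k) / (2 * π)) + (k : ℝ) / 2) * ‖ws‖ ^ 2)

/-- The gradient of the no-overlap population loss: `G(0) = 0` and, for `w ≠ 0`,
`G(w) = (1/k²)·[(k + (k²−k)/π − (k‖w*‖ sin θ_{w,w*})/(π‖w‖) − ((k²−k)‖w*‖)/(π‖w‖))·w
        − (k/π)·(π − θ_{w,w*})·w*]`. -/
noncomputable def nG {m : ℕ} (k : ℕ) (ws : EuclideanSpace ℝ (Fin m))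
    (w : EuclideanSpace ℝ (Fin m)) : EuclideanSpace ℝ (Fin m) :=
  if w = 0 then 0 else
    (1 / (k : ℝ) ^ 2) •
      ((((k : ℝ) + ((k : ℝ) ^ 2 - k) / π
          - ((k : ℝ) * ‖ws‖ * Real.sin (angle w ws)) / (π * ‖w‖)
          - (((k : ℝ) ^ 2 - k) * ‖ws‖) / (π * ‖w‖)) • w)
        - (((k : ℝ) / π) * (π - angle w ws)) • ws)

/-- `α(k) = 1/k + (k²−k)/(πk²)`. -/
noncomputable def alphac (k : ℕ) : ℝ := 1 / (k : ℝ) + ((k : ℝ) ^ 2 - k) / (π * (k : ℝ) ^ 2)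

set_option maxHeartbeats 1000000 in
/-- If `w_t ≠ 0`, `0 < θ_t < π` and `0 < λ < 1`, then the gradient descent iterate
`w_{t+1} = w_t − λ·G(w_t)` is nonzero and satisfies `θ_{t+1} < θ_t`. -/
theorem stmt9 (k m : ℕ) (hk : 1 ≤ k) (hm : 2 ≤ m)
    (ws : EuclideanSpace ℝ (Fin m)) (hws : ws ≠ 0)
    (lam : ℝ) (hlam0 : 0 < lam) (hlam1 : lam < 1)
    (wt : EuclideanSpace ℝ (Fin m)) (hwt : wt ≠ 0)
    (hθ0 : 0 < angle wt ws) (hθπ : angle wt ws < π) :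
    wt - lam • nG k ws wt ≠ 0 ∧
      angle (wt - lam • nG k ws wt) ws < angle wt ws := by
  have hπ : (0:ℝ) < π := Real.pi_pos
  have ha : (0:ℝ) < ‖wt‖ := norm_pos_iff.mpr hwt
  have hb : (0:ℝ) < ‖ws‖ := norm_pos_iff.mpr hws
  have hk0 : (0:ℝ) < (k:ℝ) := by exact_mod_cast hk
  have hk1 : (1:ℝ) ≤ (k:ℝ) := by exact_mod_cast hk
  set θ : ℝ := angle wt ws with hθdef
  have hsin : 0 < Real.sin θ := Real.sin_pos_of_pos_of_lt_pi hθ0 hθπ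
  clear_value θ
  set A : ℝ := (k : ℝ) + ((k : ℝ) ^ 2 - k) / π
          - ((k : ℝ) * ‖ws‖ * Real.sin θ) / (π * ‖wt‖)
          - (((k : ℝ) ^ 2 - k) * ‖ws‖) / (π * ‖wt‖) with hAdef
  set c : ℝ := 1 - lam * A / (k:ℝ)^2 with hcdef
  set d : ℝ := lam * ((k:ℝ)/π) * (π - θ) / (k:ℝ)^2 with hddef
  have hv : wt - lam • nG k ws wt = c • wt + d • ws := by
    rw [nG, if_neg hwt, ← hθdef, hcdef, hddef, hAdef]
    module
  have hd : 0 < d := by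
    rw [hddef]
    apply div_pos
    apply mul_pos (mul_pos hlam0 (div_pos hk0 hπ)) (by linarith)
    positivity
  have hA : A < (k:ℝ)^2 := by
    have h1 : 0 < ((k : ℝ) * ‖ws‖ * Real.sin θ) / (π * ‖wt‖) := by positivity
    have hkk : (0:ℝ) ≤ (k:ℝ)^2 - k := by nlinarith
    have h2 : 0 ≤ (((k : ℝ) ^ 2 - k) * ‖ws‖) / (π * ‖wt‖) := by positivity
    have h3 : ((k : ℝ) ^ 2 - k) / π ≤ (k:ℝ)^2 - k := by
      rw [div_le_iff₀ hπ]
      nlinarith [mul_nonneg hkk (by linarith [Real.pi_gt_three] : (0:ℝ) ≤ π - 1)]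
    rw [hAdef]; nlinarith
  have hc : 0 < c := by
    rw [hcdef]
    have : lam * A / (k:ℝ)^2 < lam := by
      rw [div_lt_iff₀ (by positivity)]
      nlinarith
    linarith
  clear_value A c d
  clear hA hAdef
  rw [hv]
  clear hv
  -- key quantities
  set p : ℝ := c * ‖wt‖ * Real.cos θ + d * ‖ws‖ with hpdef
  set s : ℝ := c * ‖wt‖ * Real.sin θ with hsdef
  set v : EuclideanSpace ℝ (Fin m) := c • wt + d • ws with hvdef
  have hip : (inner ℝ wt ws : ℝ) = ‖wt‖ * ‖ws‖ * Real.cos θ := by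
    have h := cos_angle_mul_norm_mul_norm wt ws
    rw [← hθdef] at h
    linarith [h]
  have hivws : (inner ℝ v ws : ℝ) = ‖ws‖ * p := by
    rw [hvdef, inner_add_left, real_inner_smul_left, real_inner_smul_left,
      hip, real_inner_self_eq_norm_sq, hpdef]
    ring
  have hq2 : ‖v‖^2 = p^2 + s^2 := by
    rw [hvdef, norm_add_sq_real, real_inner_smul_left, real_inner_smul_right, hip,
      norm_smul, norm_smul, Real.norm_eq_abs, Real.norm_eq_abs,
      abs_of_pos hc, abs_of_pos hd, hpdef, hsdef]
    linear_combination (-((c*‖wt‖)^2)) * Real.sin_sq_add_cos_sq θ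
  clear_value v
  clear hvdef
  have hspos : 0 < s := by rw [hsdef]; positivity
  have hqpos : 0 < ‖v‖ := by
    nlinarith [norm_nonneg v]
  have hvne : v ≠ 0 := norm_pos_iff.mp hqpos
  have hiden : p^2 - ‖v‖^2 * Real.cos θ^2
      = Real.sin θ^2 * (d*‖ws‖) * (p + c*‖wt‖*Real.cos θ) := by
    rw [hq2, hpdef, hsdef]
    linear_combination (-(c*‖wt‖*Real.cos θ + d*‖ws‖)^2) * Real.sin_sq_add_cos_sq θ
  clear_value p s
  have hkey : ‖v‖ * Real.cos θ < p := by
    have hpdb : p - c*‖wt‖*Real.cos θ = d*‖ws‖ := by rw [hpdef]; ring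
    rcases le_or_gt 0 (Real.cos θ) with hco | hco
    · have hppos : 0 < p := by
        rw [hpdef]
        have := mul_nonneg (mul_nonneg hc.le ha.le) hco
        nlinarith [mul_pos hd hb]
      have hrhs : 0 < Real.sin θ^2 * (d*‖ws‖) * (p + c*‖wt‖*Real.cos θ) := by
        apply mul_pos (by positivity)
        nlinarith [mul_nonneg (mul_nonneg hc.le ha.le) hco]
      nlinarith [mul_nonneg hqpos.le hco]
    · rcases le_or_gt 0 p with hp | hp
      · nlinarith [mul_pos hqpos (neg_pos.mpr hco)]
      · have hrhs : Real.sin θ^2 * (d*‖ws‖) * (p + c*‖wt‖*Real.cos θ) < 0 := by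
          apply mul_neg_of_pos_of_neg (by positivity)
          nlinarith [mul_pos (mul_pos hc ha) (neg_pos.mpr hco)]
        nlinarith [mul_pos hqpos (neg_pos.mpr hco)]
  have hcosv : Real.cos (angle v ws) * (‖v‖ * ‖ws‖) = ‖ws‖ * p := by
    rw [cos_angle_mul_norm_mul_norm]
    exact hivws
  have hcoslt : Real.cos θ < Real.cos (angle v ws) := by
    have h2 : Real.cos θ * (‖v‖ * ‖ws‖) < Real.cos (angle v ws) * (‖v‖ * ‖ws‖) := by
      rw [hcosv]
      nlinarith [mul_lt_mul_of_pos_left hkey hb]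
    exact lt_of_mul_lt_mul_right h2 (by positivity)
  have hang : angle v ws < θ := by
    by_contra hcon
    push_neg at hcon
    have := Real.cos_le_cos_of_nonneg_of_le_pi hθ0.le (angle_le_pi v ws) hcon
    linarith
  exact ⟨hvne, hang⟩
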